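/- (Graded Nakayama lemma.) Let R be a Γ-graded ring and J a graded right ideal of R. The following are equivalent: (1) J ⊆ rad^gr(R); (2) for every finitely generated Γ-graded right R-module M, MJ = M implies M = 0; (3) for every Γ-graded right R-module M and every graded submodule N of M such that M/N is finitely generated, N + MJ = M implies N = M. -/

import Mathlib

open CategoryTheory

universe u

instance addSubgroupNormalOfComm {M : Type*} [AddCommGroup M] (N : AddSubgroup M) :
    N.Normal := ⟨fun n hn g => by simpa [add_comm] using hn⟩

variable {Γ : Type u} [Groupoid.{u} Γ]

/-- The morphisms of the groupoid `Γ`, bundled together with their endpoints.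
For `γ : GrIdx Γ`, the morphism `γ.2.2 : γ.1 ⟶ γ.2.1` has domain `d(γ) = γ.1`
and range `r(γ) = γ.2.1`. -/
abbrev GrIdx (Γ : Type u) [Groupoid.{u} Γ] : Type u := Σ e f : Γ, e ⟶ f

/-- The data of a `Γ`-grading, a multiplication, and local units `1_e` on an
additive group `R`. -/
structure GRingData (Γ : Type u) [Groupoid.{u} Γ] (R : Type u) [AddCommGroup R] :
    Type u where
  mul : R → R → R
  component : ∀ {e f : Γ}, (e ⟶ f) → AddSubgroup R
  one : Γ → R

/-- The data of a right scalar multiplication by `R` and a `Γ`-grading on an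
additive group `M`. -/
structure GModData (Γ : Type u) [Groupoid.{u} Γ] (R : Type u) (M : Type u)
    [AddCommGroup M] : Type u where
  smul : M → R → M
  component : ∀ {e f : Γ}, (e ⟶ f) → AddSubgroup M

namespace GRingData

variable {R : Type u} [AddCommGroup R]

/-- `𝒜` makes `R` an (object unital) `Γ`-graded ring: `R` is an associative ring,
`R = ⊕_γ R_γ`, `R_γ R_δ ⊆ R_{γδ}` when `γδ` is defined and `R_γ R_δ = 0` otherwise,
each `R_e` (`e ∈ Γ₀`) is unital with identity `1_e`, and
`1_{r(γ)} a = a 1_{d(γ)} = a` for all `a ∈ R_γ`. -/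
structure IsObjectUnital (𝒜 : GRingData Γ R) : Prop where
  mul_assoc : ∀ a b c : R, 𝒜.mul (𝒜.mul a b) c = 𝒜.mul a (𝒜.mul b c)
  left_distrib : ∀ a b c : R, 𝒜.mul a (b + c) = 𝒜.mul a b + 𝒜.mul a c
  right_distrib : ∀ a b c : R, 𝒜.mul (a + b) c = 𝒜.mul a c + 𝒜.mul b c
  decompose : ∀ x : R, ∃ (s : Finset (GrIdx Γ)) (cf : GrIdx Γ → R),
      (∀ γ ∈ s, cf γ ∈ 𝒜.component γ.2.2) ∧ x = ∑ γ ∈ s, cf γ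
  independent : ∀ (s : Finset (GrIdx Γ)) (cf : GrIdx Γ → R),
      (∀ γ ∈ s, cf γ ∈ 𝒜.component γ.2.2) → ∑ γ ∈ s, cf γ = 0 → ∀ γ ∈ s, cf γ = 0
  mul_mem : ∀ {e f g : Γ} (γ : e ⟶ f) (δ : g ⟶ e) {a b : R},
      a ∈ 𝒜.component γ → b ∈ 𝒜.component δ → 𝒜.mul a b ∈ 𝒜.component (δ ≫ γ)
  mul_eq_zero : ∀ {e f g h : Γ} (γ : e ⟶ f) (δ : g ⟶ h) {a b : R},
      h ≠ e → a ∈ 𝒜.component γ → b ∈ 𝒜.component δ → 𝒜.mul a b = 0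
  one_mem : ∀ e : Γ, 𝒜.one e ∈ 𝒜.component (𝟙 e)
  one_mul : ∀ {e f : Γ} (γ : e ⟶ f) {a : R}, a ∈ 𝒜.component γ → 𝒜.mul (𝒜.one f) a = a
  mul_one : ∀ {e f : Γ} (γ : e ⟶ f) {a : R}, a ∈ 𝒜.component γ → 𝒜.mul a (𝒜.one e) = a

/-- `R` regarded as a (`Γ`-graded) right module over itself. -/
def toMod (𝒜 : GRingData Γ R) : GModData Γ R R where
  smul := 𝒜.mul
  component := fun γ => 𝒜.component γ

end GRingData

namespace GModData

variable {R : Type u} {M : Type u} {M' : Type u} [AddCommGroup M] [AddCommGroup M']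

/-- `ℳ` makes `M` a unital `Γ`-graded right module over the `Γ`-graded ring `𝒜`:
`M` is a right `R`-module, `M = ⊕_γ M_γ`, `M_σ R_τ ⊆ M_{στ}` when `στ` is defined
and `M_σ R_τ = 0` otherwise, and `m 1_{d(σ)} = m` for all `m ∈ M_σ`. -/
structure IsGraded [AddCommGroup R] (𝒜 : GRingData Γ R) (ℳ : GModData Γ R M) :
    Prop where
  add_smul : ∀ (m n : M) (a : R), ℳ.smul (m + n) a = ℳ.smul m a + ℳ.smul n a
  smul_add : ∀ (m : M) (a b : R), ℳ.smul m (a + b) = ℳ.smul m a + ℳ.smul m b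
  smul_mul : ∀ (m : M) (a b : R), ℳ.smul m (𝒜.mul a b) = ℳ.smul (ℳ.smul m a) b
  decompose : ∀ x : M, ∃ (s : Finset (GrIdx Γ)) (cf : GrIdx Γ → M),
      (∀ γ ∈ s, cf γ ∈ ℳ.component γ.2.2) ∧ x = ∑ γ ∈ s, cf γ
  independent : ∀ (s : Finset (GrIdx Γ)) (cf : GrIdx Γ → M),
      (∀ γ ∈ s, cf γ ∈ ℳ.component γ.2.2) → ∑ γ ∈ s, cf γ = 0 → ∀ γ ∈ s, cf γ = 0
  smul_mem : ∀ {e f g : Γ} (σ : e ⟶ f) (τ : g ⟶ e) {m : M} {a : R},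
      m ∈ ℳ.component σ → a ∈ 𝒜.component τ → ℳ.smul m a ∈ ℳ.component (τ ≫ σ)
  smul_eq_zero : ∀ {e f g h : Γ} (σ : e ⟶ f) (τ : g ⟶ h) {m : M} {a : R},
      h ≠ e → m ∈ ℳ.component σ → a ∈ 𝒜.component τ → ℳ.smul m a = 0
  smul_one : ∀ {e f : Γ} (σ : e ⟶ f) {m : M}, m ∈ ℳ.component σ →
      ℳ.smul m (𝒜.one e) = m

/-- An element of `M` is homogeneous if it belongs to some homogeneous component. -/
def IsHomogeneous (ℳ : GModData Γ R M) (m : M) : Prop :=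
  ∃ (e f : Γ) (γ : e ⟶ f), m ∈ ℳ.component γ

/-- `N` is a graded submodule of `M`: a submodule (subgroup closed under the right
`R`-action) generated by its homogeneous elements, i.e. `N = ⊕_γ (N ∩ M_γ)`. -/
def IsGrSub (ℳ : GModData Γ R M) (N : AddSubgroup M) : Prop :=
  (∀ m ∈ N, ∀ a : R, ℳ.smul m a ∈ N) ∧
  ∀ n ∈ N, n ∈ AddSubgroup.closure {x : M | x ∈ N ∧ ℳ.IsHomogeneous x}

/-- `M` is gr-noetherian: there is no strictly increasing infinite chain of graded
submodules. -/
def GrNoetherian (ℳ : GModData Γ R M) : Prop :=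
  ¬ ∃ c : ℕ → AddSubgroup M, (∀ n, ℳ.IsGrSub (c n)) ∧ ∀ n, c n < c (n + 1)

/-- `M` is gr-artinian: there is no strictly decreasing infinite chain of graded
submodules. -/
def GrArtinian (ℳ : GModData Γ R M) : Prop :=
  ¬ ∃ c : ℕ → AddSubgroup M, (∀ n, ℳ.IsGrSub (c n)) ∧ ∀ n, c (n + 1) < c n

/-- The `R`-submodule of `M` generated by a set `X`. -/
def rClosure (ℳ : GModData Γ R M) (X : Set M) : AddSubgroup M :=
  sInf {N : AddSubgroup M | X ⊆ N ∧ ∀ m ∈ N, ∀ a : R, ℳ.smul m a ∈ N}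

/-- `M` is finitely generated (as a right `R`-module). -/
def FG (ℳ : GModData Γ R M) : Prop := ∃ s : Finset M, ℳ.rClosure ↑s = ⊤

/-- The submodule `N` of `M` is finitely generated. -/
def FGSub (ℳ : GModData Γ R M) (N : AddSubgroup M) : Prop :=
  ∃ s : Finset M, ↑s ⊆ (N : Set M) ∧ ℳ.rClosure ↑s = N

/-- `M` is finitely gr-cogenerated: every family of graded submodules with zero
intersection has a finite subfamily with zero intersection. -/
def FinGrCogenerated (ℳ : GModData Γ R M) : Prop :=
  ∀ S : Set (AddSubgroup M), (∀ N ∈ S, ℳ.IsGrSub N) → sInf S = ⊥ →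
    ∃ t : Finset (AddSubgroup M), ↑t ⊆ S ∧ t.inf id = ⊥

/-- The quotient module `M/N`, with grading `(M/N)_γ = (M_γ + N)/N`. -/
noncomputable def quot (ℳ : GModData Γ R M) (N : AddSubgroup M) :
    GModData Γ R (M ⧸ N) where
  smul x a := QuotientAddGroup.mk (ℳ.smul (Quotient.out x) a)
  component := fun γ => (ℳ.component γ).map (QuotientAddGroup.mk' N)

open scoped Classical in
/-- The submodule `N`, regarded as a `Γ`-graded right `R`-module. -/
noncomputable def restrict (ℳ : GModData Γ R M) (N : AddSubgroup M) :
    GModData Γ R ↥N where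
  smul m a := if h : ℳ.smul (↑m) a ∈ N then ⟨ℳ.smul (↑m) a, h⟩ else 0
  component := fun γ => (ℳ.component γ).addSubgroupOf N

/-- The subquotient module `P/N` (for `N ≤ P` graded submodules of `M`). -/
noncomputable def subquot (ℳ : GModData Γ R M) (N P : AddSubgroup M) :
    GModData Γ R (↥P ⧸ N.addSubgroupOf P) :=
  (ℳ.restrict P).quot (N.addSubgroupOf P)

/-- `M(e) = ⊕_{r(γ) = e} M_γ`, for `e ∈ Γ₀`. -/
def part (ℳ : GModData Γ R M) (e : Γ) : AddSubgroup M :=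
  ⨆ (f : Γ) (γ : f ⟶ e), ℳ.component γ

/-- `Γ'₀(M) = {e ∈ Γ₀ : M(e) ≠ 0}`. -/
def partSupport (ℳ : GModData Γ R M) : Set Γ := {e : Γ | ℳ.part e ≠ ⊥}

/-- `M` is `Γ₀`-noetherian: `M(e)` is gr-noetherian for every `e ∈ Γ₀`. -/
def G0Noetherian (ℳ : GModData Γ R M) : Prop :=
  ∀ e : Γ, (ℳ.restrict (ℳ.part e)).GrNoetherian

/-- `M` is `Γ₀`-artinian: `M(e)` is gr-artinian for every `e ∈ Γ₀`. -/
def G0Artinian (ℳ : GModData Γ R M) : Prop :=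
  ∀ e : Γ, (ℳ.restrict (ℳ.part e)).GrArtinian

/-- `M` is gr-simple: `M ≠ 0` and its only graded submodules are `0` and `M`. -/
def IsGrSimple (ℳ : GModData Γ R M) : Prop :=
  (⊤ : AddSubgroup M) ≠ ⊥ ∧ ∀ N : AddSubgroup M, ℳ.IsGrSub N → N = ⊥ ∨ N = ⊤

/-- `N` is a gr-simple graded submodule of `M`. -/
def IsGrSimpleSub (ℳ : GModData Γ R M) (N : AddSubgroup M) : Prop :=
  ℳ.IsGrSub N ∧ N ≠ ⊥ ∧
    ∀ L : AddSubgroup M, ℳ.IsGrSub L → L ≤ N → L = ⊥ ∨ L = N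

/-- `N` is a gr-maximal graded submodule of `M`. -/
def IsGrMaximalSub (ℳ : GModData Γ R M) (N : AddSubgroup M) : Prop :=
  ℳ.IsGrSub N ∧ N ≠ ⊤ ∧
    ∀ L : AddSubgroup M, ℳ.IsGrSub L → N ≤ L → L = N ∨ L = ⊤

/-- The graded Jacobson radical of `M`: the intersection of all gr-maximal graded
submodules of `M` (equal to `M` when there are none). -/
def grRad (ℳ : GModData Γ R M) : AddSubgroup M := sInf {N | ℳ.IsGrMaximalSub N}

/-- The gr-socle of `M`: the sum of all gr-simple graded submodules of `M`
(equal to `0` when there are none). -/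
def grSoc (ℳ : GModData Γ R M) : AddSubgroup M := sSup {N | ℳ.IsGrSimpleSub N}

/-- `N` is gr-superfluous in `M`. -/
def GrSuperfluous (ℳ : GModData Γ R M) (N : AddSubgroup M) : Prop :=
  ∀ X : AddSubgroup M, ℳ.IsGrSub X → N ⊔ X = ⊤ → X = ⊤

/-- `N` is gr-essential in `M`. -/
def GrEssential (ℳ : GModData Γ R M) (N : AddSubgroup M) : Prop :=
  ∀ X : AddSubgroup M, ℳ.IsGrSub X → N ⊓ X = ⊥ → X = ⊥

/-- `M` is gr-semisimple: the sum of all gr-simple graded submodules is `M`. -/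
def GrSemisimple (ℳ : GModData Γ R M) : Prop :=
  sSup {N : AddSubgroup M | ℳ.IsGrSimpleSub N} = ⊤

/-- `c 0 = 0 ⊆ c 1 ⊆ ⋯ ⊆ c n = M` is a gr-composition series of `M` of length `n`. -/
def IsGrCompSeries (ℳ : GModData Γ R M) (n : ℕ) (c : ℕ → AddSubgroup M) : Prop :=
  c 0 = ⊥ ∧ c n = ⊤ ∧ (∀ i, i ≤ n → ℳ.IsGrSub (c i)) ∧
  (∀ i, i < n → c i ≤ c (i + 1)) ∧
  ∀ i, i < n → (ℳ.subquot (c i) (c (i + 1))).IsGrSimple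

/-- `M` has finite gr-length: it admits a gr-composition series. -/
def FiniteGrLength (ℳ : GModData Γ R M) : Prop := ∃ n c, ℳ.IsGrCompSeries n c

/-- `g : M → M'` is a gr-homomorphism of graded right `R`-modules. -/
def IsGrHom (ℳ : GModData Γ R M) (𝒩 : GModData Γ R M') (g : M → M') : Prop :=
  (∀ m n : M, g (m + n) = g m + g n) ∧
  (∀ (m : M) (a : R), g (ℳ.smul m a) = 𝒩.smul (g m) a) ∧
  ∀ (e f : Γ) (σ : e ⟶ f), ∀ m ∈ ℳ.component σ, g m ∈ 𝒩.component σ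

/-- `M` and `M'` are gr-isomorphic (there is a bijective gr-homomorphism). -/
def GrIso (ℳ : GModData Γ R M) (𝒩 : GModData Γ R M') : Prop :=
  ∃ g : M → M', IsGrHom ℳ 𝒩 g ∧ Function.Bijective g

/-- `g : M → M'` is a homomorphism of degree `γ` (where `γ : e ⟶ f`, i.e.
`d(γ) = e`): `g(M_σ) ⊆ M'_{γσ}` when `γσ` is defined and `g(M_σ) = 0` otherwise. -/
def IsHomOfDeg (ℳ : GModData Γ R M) (𝒩 : GModData Γ R M') {e f : Γ} (γ : e ⟶ f)
    (g : M → M') : Prop :=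
  (∀ m n : M, g (m + n) = g m + g n) ∧
  (∀ (m : M) (a : R), g (ℳ.smul m a) = 𝒩.smul (g m) a) ∧
  (∀ (a : Γ) (σ : a ⟶ e), ∀ m ∈ ℳ.component σ, g m ∈ 𝒩.component (σ ≫ γ)) ∧
  (∀ (a b : Γ) (σ : a ⟶ b), b ≠ e → ∀ m ∈ ℳ.component σ, g m = 0)

/-- `MJ`: the submodule of `M` consisting of finite sums of elements `m a`,
`m ∈ M`, `a ∈ J`. -/
def smulSet [AddCommGroup R] (ℳ : GModData Γ R M) (J : AddSubgroup R) : AddSubgroup M :=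
  AddSubgroup.closure {x : M | ∃ (m : M) (a : R), a ∈ J ∧ x = ℳ.smul m a}

open scoped Classical in
/-- The direct sum `⊕_{j ∈ J} M_j` of graded right modules, with grading
`(⊕_j M_j)_γ = ⊕_j (M_j)_γ`. -/
noncomputable def dsum {J : Type u} {Mf : J → Type u} [∀ j, AddCommGroup (Mf j)]
    (df : ∀ j, GModData Γ R (Mf j)) : GModData Γ R (Π₀ j, Mf j) where
  smul m a :=
    if h : ∃ y : Π₀ j, Mf j, ∀ j, y j = (df j).smul (m j) a then h.choose else 0
  component := fun γ => ⨅ j : J, ((df j).component γ).comap (DFinsupp.evalAddMonoidHom j)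

/-- A descending chain of graded submodules is tight if
`Γ'₀(M_i/M_{i+1}) ⊇ Γ'₀(M_{i+1}/M_{i+2})` for all `i`. -/
def TightDesc (ℳ : GModData Γ R M) (c : ℕ → AddSubgroup M) : Prop :=
  (∀ i, ℳ.IsGrSub (c i)) ∧ (∀ i, c (i + 1) ≤ c i) ∧
  ∀ i, (ℳ.subquot (c (i + 2)) (c (i + 1))).partSupport ⊆
    (ℳ.subquot (c (i + 1)) (c i)).partSupport

/-- An ascending chain of graded submodules is tight if
`Γ'₀(M_{i+1}/M_i) ⊇ Γ'₀(M_{i+2}/M_{i+1})` for all `i`. -/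
def TightAsc (ℳ : GModData Γ R M) (c : ℕ → AddSubgroup M) : Prop :=
  (∀ i, ℳ.IsGrSub (c i)) ∧ (∀ i, c i ≤ c (i + 1)) ∧
  ∀ i, (ℳ.subquot (c (i + 1)) (c (i + 2))).partSupport ⊆
    (ℳ.subquot (c i) (c (i + 1))).partSupport

/-- `M` is strongly `Γ₀`-artinian: every tight descending chain of graded
submodules stabilizes. -/
def StronglyG0Artinian (ℳ : GModData Γ R M) : Prop :=
  ∀ c : ℕ → AddSubgroup M, ℳ.TightDesc c → ∃ n, ∀ m, n ≤ m → c m = c n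

/-- `M` is strongly `Γ₀`-noetherian: every tight ascending chain of graded
submodules stabilizes. -/
def StronglyG0Noetherian (ℳ : GModData Γ R M) : Prop :=
  ∀ c : ℕ → AddSubgroup M, ℳ.TightAsc c → ∃ n, ∀ m, n ≤ m → c m = c n

end GModData

/-- `E` is a gr-injective graded right `R`-module: for all graded right `R`-modules
`M`, `N`, every injective gr-homomorphism `g : N → M` and every gr-homomorphism
`h : N → E`, there is a gr-homomorphism `h' : M → E` with `h' ∘ g = h`. -/
def GrInjective {R : Type u} [AddCommGroup R] (𝒜 : GRingData Γ R) {E : Type u}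
    [AddCommGroup E] (ℰ : GModData Γ R E) : Prop :=
  ∀ (M N : Type u) [AddCommGroup M] [AddCommGroup N]
    (ℳ : GModData Γ R M) (𝒩 : GModData Γ R N),
    ℳ.IsGraded 𝒜 → 𝒩.IsGraded 𝒜 →
    ∀ g : N → M, GModData.IsGrHom 𝒩 ℳ g → Function.Injective g →
    ∀ h : N → E, GModData.IsGrHom 𝒩 ℰ h →
    ∃ h' : M → E, GModData.IsGrHom ℳ ℰ h' ∧ ∀ y : N, h' (g y) = h y

/-- A bundled `Γ`-graded right module over the graded ring `𝒜`. -/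
structure GrModule (Γ : Type u) [Groupoid.{u} Γ] {R : Type u} [AddCommGroup R]
    (𝒜 : GRingData Γ R) : Type (u + 1) where
  carrier : Type u
  [addCommGroup : AddCommGroup carrier]
  data : GModData Γ R carrier
  graded : data.IsGraded 𝒜

attribute [instance] GrModule.addCommGroup

namespace GRingData

variable {R : Type u} [AddCommGroup R]

/-- `R` is right `Γ₀`-noetherian. -/
def RightG0Noetherian (𝒜 : GRingData Γ R) : Prop := 𝒜.toMod.G0Noetherian

/-- `R` is right `Γ₀`-artinian. -/
def RightG0Artinian (𝒜 : GRingData Γ R) : Prop := 𝒜.toMod.G0Artinian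

/-- The principal right ideal `aR`. -/
def principal (𝒜 : GRingData Γ R) (a : R) : AddSubgroup R :=
  AddSubgroup.closure {x : R | ∃ b : R, x = 𝒜.mul a b}

/-- A gr-principal graded right ideal: one of the form `aR` with `a` homogeneous. -/
def IsGrPrincipal (𝒜 : GRingData Γ R) (N : AddSubgroup R) : Prop :=
  ∃ a : R, 𝒜.toMod.IsHomogeneous a ∧ N = 𝒜.principal a

/-- `N` is a graded left ideal of `R`, i.e. a graded submodule of `_R R`. -/
def IsGrLeftIdeal (𝒜 : GRingData Γ R) (N : AddSubgroup R) : Prop :=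
  (∀ m ∈ N, ∀ a : R, 𝒜.mul a m ∈ N) ∧
  ∀ n ∈ N, n ∈ AddSubgroup.closure {x : R | x ∈ N ∧ 𝒜.toMod.IsHomogeneous x}

/-- `N` is a gr-maximal graded left ideal of `R`. -/
def IsGrMaxLeftIdeal (𝒜 : GRingData Γ R) (N : AddSubgroup R) : Prop :=
  𝒜.IsGrLeftIdeal N ∧ N ≠ ⊤ ∧
    ∀ L : AddSubgroup R, 𝒜.IsGrLeftIdeal L → N ≤ L → L = N ∨ L = ⊤

/-- The graded Jacobson radical of `R` as a left module over itself:
the intersection of all gr-maximal graded left ideals. -/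
def lRad (𝒜 : GRingData Γ R) : AddSubgroup R := sInf {N | 𝒜.IsGrMaxLeftIdeal N}

/-- `N` is a graded (two-sided) ideal of `R`. -/
def IsGrIdeal (𝒜 : GRingData Γ R) (N : AddSubgroup R) : Prop :=
  𝒜.toMod.IsGrSub N ∧ ∀ m ∈ N, ∀ a : R, 𝒜.mul a m ∈ N

/-- `N ⊆ R_e` is a left ideal of the unital ring `R_e`. -/
def IsLeftIdealIn (𝒜 : GRingData Γ R) (e : Γ) (N : Set R) : Prop :=
  N ⊆ (𝒜.component (𝟙 e) : Set R) ∧ (0 : R) ∈ N ∧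
  (∀ a ∈ N, ∀ b ∈ N, a - b ∈ N) ∧
  ∀ r ∈ 𝒜.component (𝟙 e), ∀ a ∈ N, 𝒜.mul r a ∈ N

/-- `N` is a maximal left ideal of the unital ring `R_e`. -/
def IsMaxLeftIdealIn (𝒜 : GRingData Γ R) (e : Γ) (N : Set R) : Prop :=
  𝒜.IsLeftIdealIn e N ∧ N ≠ (𝒜.component (𝟙 e) : Set R) ∧
  ∀ L : Set R, 𝒜.IsLeftIdealIn e L → N ⊆ L →
    L = N ∨ L = (𝒜.component (𝟙 e) : Set R)

/-- The Jacobson radical `rad(R_e)` of the unital ring `R_e`, as a subset of `R`: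
the intersection of all maximal left ideals of `R_e`. -/
def radIn (𝒜 : GRingData Γ R) (e : Γ) : Set R :=
  (𝒜.component (𝟙 e) : Set R) ∩ ⋂₀ {N : Set R | 𝒜.IsMaxLeftIdealIn e N}

/-- The quotient graded ring `R/I` of `R` by a graded ideal `I`. -/
noncomputable def quotRing (𝒜 : GRingData Γ R) (I : AddSubgroup R) :
    GRingData Γ (R ⧸ I) where
  mul x y := QuotientAddGroup.mk (𝒜.mul (Quotient.out x) (Quotient.out y))
  component := fun γ => (𝒜.component γ).map (QuotientAddGroup.mk' I)
  one e := QuotientAddGroup.mk (𝒜.one e)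

/-- `R` is a gr-semisimple ring. -/
def GrSemisimpleRing (𝒜 : GRingData Γ R) : Prop := 𝒜.toMod.GrSemisimple

/-- `R` is gr-semilocal: the `Γ`-graded ring `R/rad^gr(R)` is gr-semisimple. -/
noncomputable def GrSemilocal (𝒜 : GRingData Γ R) : Prop :=
  ((𝒜.quotRing 𝒜.toMod.grRad).GrSemisimpleRing)

end GRingData

section NakayamaAux

set_option linter.unusedSectionVars false

open Finset in
lemma sum_union_ite_sub {ι β : Type*} [AddCommGroup β] [DecidableEq ι]
    (s t : Finset ι) (f g : ι → β) :
    ∑ γ ∈ s ∪ t, ((if γ ∈ s then f γ else 0) - (if γ ∈ t then g γ else 0))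
      = ∑ γ ∈ s, f γ - ∑ γ ∈ t, g γ := by
  rw [Finset.sum_sub_distrib, Finset.sum_ite_mem, Finset.sum_ite_mem,
    Finset.union_inter_cancel_left, Finset.union_inter_cancel_right]

open Finset in
lemma sum_union_ite_add {ι β : Type*} [AddCommGroup β] [DecidableEq ι]
    (s t : Finset ι) (f g : ι → β) :
    ∑ γ ∈ s ∪ t, ((if γ ∈ s then f γ else 0) + (if γ ∈ t then g γ else 0))
      = ∑ γ ∈ s, f γ + ∑ γ ∈ t, g γ := by
  rw [Finset.sum_add_distrib, Finset.sum_ite_mem, Finset.sum_ite_mem,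
    Finset.union_inter_cancel_left, Finset.union_inter_cancel_right]

variable {Γ : Type u} [Groupoid.{u} Γ] {R : Type u} [AddCommGroup R]
  {M : Type u} [AddCommGroup M]

namespace GModData

variable {𝒜 : GRingData Γ R} {ℳ : GModData Γ R M}

/-- Right multiplication by an element, as an additive hom `R →+ M`. -/
def IsGraded.homL (h : ℳ.IsGraded 𝒜) (m : M) : R →+ M :=
  AddMonoidHom.mk' (ℳ.smul m) (h.smul_add m)

@[simp] lemma IsGraded.homL_apply (h : ℳ.IsGraded 𝒜) (m : M) (a : R) :
    h.homL m a = ℳ.smul m a := rfl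

/-- Left multiplication, as an additive hom `M →+ M`. -/
def IsGraded.homR (h : ℳ.IsGraded 𝒜) (a : R) : M →+ M :=
  AddMonoidHom.mk' (fun m => ℳ.smul m a) (fun m n => h.add_smul m n a)

@[simp] lemma IsGraded.homR_apply (h : ℳ.IsGraded 𝒜) (a : R) (m : M) :
    h.homR a m = ℳ.smul m a := rfl

lemma IsGraded.zero_smul (h : ℳ.IsGraded 𝒜) (a : R) : ℳ.smul 0 a = 0 :=
  (h.homR a).map_zero

lemma IsGraded.smul_zero (h : ℳ.IsGraded 𝒜) (m : M) : ℳ.smul m 0 = 0 :=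
  (h.homL m).map_zero

lemma IsGraded.neg_smul (h : ℳ.IsGraded 𝒜) (m : M) (a : R) :
    ℳ.smul (-m) a = -ℳ.smul m a := (h.homR a).map_neg m

/-- Decompose an element of the closure of homogeneous elements of a subgroup
as a finite sum of homogeneous elements of that subgroup, indexed by degrees. -/
lemma exists_finsum_of_mem_closure (ℳ : GModData Γ R M) (N : AddSubgroup M) {n : M}
    (hn : n ∈ AddSubgroup.closure {x : M | x ∈ N ∧ ℳ.IsHomogeneous x}) :
    ∃ (s : Finset (GrIdx Γ)) (cf : GrIdx Γ → M),
      (∀ γ ∈ s, cf γ ∈ ℳ.component γ.2.2 ∧ cf γ ∈ N) ∧ n = ∑ γ ∈ s, cf γ := by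
  classical
  induction hn using AddSubgroup.closure_induction with
  | mem x hx =>
    obtain ⟨hxN, e, f, γ, hγ⟩ := hx
    refine ⟨{⟨e, f, γ⟩}, fun _ => x, ?_, by simp⟩
    rintro δ hδ
    simp only [Finset.mem_singleton] at hδ
    subst hδ
    exact ⟨hγ, hxN⟩
  | zero => exact ⟨∅, fun _ => 0, by simp, by simp⟩
  | add x y hx hy ihx ihy =>
    obtain ⟨s, cf, hcf, rfl⟩ := ihx
    obtain ⟨t, df, hdf, rfl⟩ := ihy
    refine ⟨s ∪ t, fun γ => (if γ ∈ s then cf γ else 0) + (if γ ∈ t then df γ else 0),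
      ?_, (sum_union_ite_add s t cf df).symm⟩
    intro γ _
    constructor
    · apply add_mem <;> split <;>
        first | exact (hcf _ ‹_›).1 | exact (hdf _ ‹_›).1 | exact zero_mem _
    · apply add_mem <;> split <;>
        first | exact (hcf _ ‹_›).2 | exact (hdf _ ‹_›).2 | exact zero_mem _
  | neg x hx ihx =>
    obtain ⟨s, cf, hcf, rfl⟩ := ihx
    exact ⟨s, fun γ => -cf γ, fun γ hγ => ⟨neg_mem (hcf γ hγ).1, neg_mem (hcf γ hγ).2⟩,
      by rw [Finset.sum_neg_distrib]⟩

lemma subset_rClosure (ℳ : GModData Γ R M) (X : Set M) : X ⊆ ↑(ℳ.rClosure X) := by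
  intro x hx
  simp only [rClosure, AddSubgroup.coe_sInf, Set.mem_iInter, SetLike.mem_coe,
    AddSubgroup.mem_sInf]
  intro N hN
  exact hN.1 hx

lemma rClosure_smul (ℳ : GModData Γ R M) {X : Set M} {m : M}
    (hm : m ∈ ℳ.rClosure X) (a : R) : ℳ.smul m a ∈ ℳ.rClosure X := by
  simp only [rClosure, AddSubgroup.mem_sInf] at hm ⊢
  intro N hN
  exact hN.2 m (hm N hN) a

lemma rClosure_le (ℳ : GModData Γ R M) {X : Set M} {N : AddSubgroup M}
    (hX : X ⊆ ↑N) (hN : ∀ m ∈ N, ∀ a : R, ℳ.smul m a ∈ N) : ℳ.rClosure X ≤ N :=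
  sInf_le ⟨hX, hN⟩

lemma isGrSub_bot (h : ℳ.IsGraded 𝒜) : ℳ.IsGrSub ⊥ := by
  constructor
  · intro m hm a
    simp only [AddSubgroup.mem_bot] at hm ⊢
    rw [hm, h.zero_smul]
  · intro n hn
    simp only [AddSubgroup.mem_bot] at hn
    rw [hn]; exact zero_mem _

lemma isGrSub_sup (h : ℳ.IsGraded 𝒜) {A B : AddSubgroup M} (hA : ℳ.IsGrSub A)
    (hB : ℳ.IsGrSub B) : ℳ.IsGrSub (A ⊔ B) := by
  constructor
  · intro m hm a
    obtain ⟨y, hy, z, hz, rfl⟩ := AddSubgroup.mem_sup.mp hm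
    rw [h.add_smul]
    exact AddSubgroup.mem_sup.mpr ⟨_, hA.1 y hy a, _, hB.1 z hz a, rfl⟩
  · intro n hn
    obtain ⟨y, hy, z, hz, rfl⟩ := AddSubgroup.mem_sup.mp hn
    refine add_mem (AddSubgroup.closure_mono ?_ (hA.2 y hy))
      (AddSubgroup.closure_mono ?_ (hB.2 z hz))
    · rintro x ⟨hx, hh⟩; exact ⟨AddSubgroup.mem_sup_left hx, hh⟩
    · rintro x ⟨hx, hh⟩; exact ⟨AddSubgroup.mem_sup_right hx, hh⟩

section Quot

variable {N : AddSubgroup M}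

lemma quot_smul_mk (h : ℳ.IsGraded 𝒜) (hN : ∀ m ∈ N, ∀ a : R, ℳ.smul m a ∈ N)
    (m : M) (a : R) :
    (ℳ.quot N).smul (QuotientAddGroup.mk m) a = QuotientAddGroup.mk (ℳ.smul m a) := by
  show QuotientAddGroup.mk (ℳ.smul (Quotient.out (QuotientAddGroup.mk m : M ⧸ N)) a) = _
  set m' := Quotient.out (QuotientAddGroup.mk m : M ⧸ N) with hm'
  have h1 : -m' + m ∈ N := by
    rw [← QuotientAddGroup.eq]
    exact QuotientAddGroup.out_eq' _
  rw [QuotientAddGroup.eq]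
  have h2 : ℳ.smul m a = ℳ.smul m' a + ℳ.smul (-m' + m) a := by
    rw [← h.add_smul, add_neg_cancel_left]
  rw [h2, neg_add_cancel_left]
  exact hN _ h1 a

lemma quot_component (γ : GrIdx Γ) :
    (ℳ.quot N).component γ.2.2 = (ℳ.component γ.2.2).map (QuotientAddGroup.mk' N) := rfl

lemma quot_isGraded (h : ℳ.IsGraded 𝒜) (hN : ℳ.IsGrSub N) :
    (ℳ.quot N).IsGraded 𝒜 := by
  classical
  have qsm := quot_smul_mk (N := N) h hN.1
  constructor
  · intro x y a
    obtain ⟨m, rfl⟩ := QuotientAddGroup.mk_surjective x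
    obtain ⟨n, rfl⟩ := QuotientAddGroup.mk_surjective y
    rw [← QuotientAddGroup.mk_add, qsm, qsm, qsm, h.add_smul, QuotientAddGroup.mk_add]
  · intro x a b
    obtain ⟨m, rfl⟩ := QuotientAddGroup.mk_surjective x
    rw [qsm, qsm, qsm, h.smul_add, QuotientAddGroup.mk_add]
  · intro x a b
    obtain ⟨m, rfl⟩ := QuotientAddGroup.mk_surjective x
    rw [qsm, qsm, qsm, h.smul_mul]
  · intro x
    obtain ⟨m, rfl⟩ := QuotientAddGroup.mk_surjective x
    obtain ⟨s, cf, hcf, rfl⟩ := h.decompose m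
    refine ⟨s, fun γ => QuotientAddGroup.mk (cf γ), fun γ hγ => ⟨cf γ, hcf γ hγ, rfl⟩, ?_⟩
    exact map_sum (QuotientAddGroup.mk' N) cf s
  · intro s cf hcf hsum γ₀ hγ₀
    have hlift : ∀ γ : GrIdx Γ, ∃ m : M,
        γ ∈ s → (m ∈ ℳ.component γ.2.2 ∧ QuotientAddGroup.mk m = cf γ) := by
      intro γ
      by_cases hγ : γ ∈ s
      · obtain ⟨m, hm, hmk⟩ := hcf γ hγ
        exact ⟨m, fun _ => ⟨hm, hmk⟩⟩
      · exact ⟨0, fun hh => absurd hh hγ⟩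
    choose mγ hmγ using hlift
    have hmem : (∑ γ ∈ s, mγ γ) ∈ N := by
      rw [← QuotientAddGroup.eq_zero_iff]
      calc (↑(∑ γ ∈ s, mγ γ) : M ⧸ N)
          = ∑ γ ∈ s, (QuotientAddGroup.mk (mγ γ) : M ⧸ N) :=
            map_sum (QuotientAddGroup.mk' N) mγ s
        _ = ∑ γ ∈ s, cf γ := Finset.sum_congr rfl fun γ hγ => (hmγ γ hγ).2
        _ = 0 := hsum
    obtain ⟨t, nf, hnf, heq⟩ := ℳ.exists_finsum_of_mem_closure N (hN.2 _ hmem)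
    have hind := h.independent (s ∪ t)
      (fun γ => (if γ ∈ s then mγ γ else 0) - (if γ ∈ t then nf γ else 0))
      (by
        intro γ _
        refine sub_mem ?_ ?_ <;> split <;>
          first | exact (hmγ _ ‹_›).1 | exact (hnf _ ‹_›).1 | exact zero_mem _)
      (by rw [sum_union_ite_sub, ← heq, sub_self])
    have h0 := hind γ₀ (Finset.mem_union_left _ hγ₀)
    simp only [if_pos hγ₀, sub_eq_zero] at h0
    rw [← (hmγ γ₀ hγ₀).2, QuotientAddGroup.eq_zero_iff, h0]
    split
    · exact (hnf _ ‹_›).2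
    · exact zero_mem _
  · rintro e f g σ τ x a hx ha
    obtain ⟨m, hm, rfl⟩ := hx
    rw [QuotientAddGroup.mk'_apply, qsm]
    exact ⟨ℳ.smul m a, h.smul_mem σ τ hm ha, rfl⟩
  · rintro e f g g' σ τ x a hne hx ha
    obtain ⟨m, hm, rfl⟩ := hx
    rw [QuotientAddGroup.mk'_apply, qsm, h.smul_eq_zero σ τ hne hm ha]
    rfl
  · rintro e f σ x hx
    obtain ⟨m, hm, rfl⟩ := hx
    rw [QuotientAddGroup.mk'_apply, qsm, h.smul_one σ hm]

lemma fg_quot (h : ℳ.IsGraded 𝒜) (hN : ∀ m ∈ N, ∀ a : R, ℳ.smul m a ∈ N)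
    (hFG : ℳ.FG) : (ℳ.quot N).FG := by
  classical
  obtain ⟨s, hs⟩ := hFG
  refine ⟨s.image (QuotientAddGroup.mk : M → M ⧸ N), ?_⟩
  set T := (ℳ.quot N).rClosure ↑(s.image (QuotientAddGroup.mk : M → M ⧸ N)) with hT
  have hcom : ℳ.rClosure ↑s ≤ T.comap (QuotientAddGroup.mk' N) := by
    apply ℳ.rClosure_le
    · intro m hm
      simp only [AddSubgroup.coe_comap, Set.mem_preimage, SetLike.mem_coe]
      exact (ℳ.quot N).subset_rClosure _ (by
        simp only [Finset.coe_image, Set.mem_image, Finset.mem_coe]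
        exact ⟨m, hm, rfl⟩)
    · intro m hm a
      simp only [AddSubgroup.mem_comap] at hm ⊢
      rw [QuotientAddGroup.mk'_apply, ← quot_smul_mk h hN]
      exact (ℳ.quot N).rClosure_smul hm a
  rw [hs] at hcom
  rw [eq_top_iff]
  intro x _
  obtain ⟨m, rfl⟩ := QuotientAddGroup.mk_surjective x
  exact hcom (AddSubgroup.mem_top m)

lemma map_smulSet_le (h : ℳ.IsGraded 𝒜) (hN : ∀ m ∈ N, ∀ a : R, ℳ.smul m a ∈ N)
    (J : AddSubgroup R) :
    (ℳ.smulSet J).map (QuotientAddGroup.mk' N) ≤ (ℳ.quot N).smulSet J := by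
  rw [smulSet, AddMonoidHom.map_closure, AddSubgroup.closure_le]
  rintro x ⟨y, ⟨m, a, haJ, rfl⟩, rfl⟩
  apply AddSubgroup.subset_closure
  exact ⟨QuotientAddGroup.mk m, a, haJ, (quot_smul_mk h hN m a).symm⟩

lemma quot_isGrSimple (h : ℳ.IsGraded 𝒜) {P : AddSubgroup M}
    (hP : ℳ.IsGrMaximalSub P) : (ℳ.quot P).IsGrSimple := by
  constructor
  · obtain ⟨y, hy⟩ : ∃ y, y ∉ P := by
      by_contra hc
      push_neg at hc
      exact hP.2.1 (AddSubgroup.eq_top_iff' P |>.mpr hc)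
    intro hc
    apply hy
    rw [← QuotientAddGroup.eq_zero_iff]
    have : (QuotientAddGroup.mk y : M ⧸ P) ∈ (⊤ : AddSubgroup (M ⧸ P)) :=
      AddSubgroup.mem_top _
    rw [hc] at this
    exact this
  · intro Q hQ
    set Q' := Q.comap (QuotientAddGroup.mk' P) with hQ'
    have hPQ' : P ≤ Q' := by
      intro p hp
      simp only [hQ', AddSubgroup.mem_comap, QuotientAddGroup.mk'_apply,
        QuotientAddGroup.eq_zero_iff _ |>.mpr hp]
      exact zero_mem Q
    have hQ'gr : ℳ.IsGrSub Q' := by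
      constructor
      · intro m hm a
        simp only [hQ', AddSubgroup.mem_comap, QuotientAddGroup.mk'_apply] at hm ⊢
        rw [← quot_smul_mk h hP.1.1]
        exact hQ.1 _ hm a
      · intro m hm
        simp only [hQ', AddSubgroup.mem_comap, QuotientAddGroup.mk'_apply] at hm
        obtain ⟨t, nf, hnf, heq⟩ :=
          (ℳ.quot P).exists_finsum_of_mem_closure Q (hQ.2 _ hm)
        have hlift : ∀ γ : GrIdx Γ, ∃ x : M,
            γ ∈ t → (x ∈ ℳ.component γ.2.2 ∧ QuotientAddGroup.mk x = nf γ) := by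
          intro γ
          by_cases hγ : γ ∈ t
          · obtain ⟨x, hx, hxk⟩ := (hnf γ hγ).1
            exact ⟨x, fun _ => ⟨hx, hxk⟩⟩
          · exact ⟨0, fun hh => absurd hh hγ⟩
        choose xf hxf using hlift
        have hdiff : m - ∑ γ ∈ t, xf γ ∈ P := by
          rw [← QuotientAddGroup.eq_zero_iff]
          have hsum2 : (↑(∑ γ ∈ t, xf γ) : M ⧸ P) = QuotientAddGroup.mk m := by
            calc (↑(∑ γ ∈ t, xf γ) : M ⧸ P)
                = ∑ γ ∈ t, (QuotientAddGroup.mk (xf γ) : M ⧸ P) :=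
                  map_sum (QuotientAddGroup.mk' P) xf t
              _ = ∑ γ ∈ t, nf γ := Finset.sum_congr rfl fun γ hγ => (hxf γ hγ).2
              _ = QuotientAddGroup.mk m := heq.symm
          rw [QuotientAddGroup.mk_sub, hsum2, sub_self]
        have hm' : m = (m - ∑ γ ∈ t, xf γ) + ∑ γ ∈ t, xf γ := by abel
        rw [hm']
        refine add_mem ?_ (AddSubgroup.sum_mem _ fun γ hγ => ?_)
        · refine AddSubgroup.closure_mono ?_ (hP.1.2 _ hdiff)
          rintro z ⟨hz, hzh⟩
          exact ⟨hPQ' hz, hzh⟩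
        · apply AddSubgroup.subset_closure
          refine ⟨?_, γ.1, γ.2.1, γ.2.2, (hxf γ hγ).1⟩
          simp only [hQ', AddSubgroup.mem_comap, QuotientAddGroup.mk'_apply,
            (hxf γ hγ).2]
          exact (hnf γ hγ).2
    rcases hP.2.2 Q' hQ'gr hPQ' with hc | hc
    · left
      have := AddSubgroup.map_comap_eq_self_of_surjective
        (QuotientAddGroup.mk'_surjective P) Q
      rw [← this, ← hQ', hc]
      exact QuotientAddGroup.map_mk'_self P
    · right
      have := AddSubgroup.map_comap_eq_self_of_surjective
        (QuotientAddGroup.mk'_surjective P) Q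
      rw [← this, ← hQ', hc]
      exact AddSubgroup.map_top_of_surjective _ (QuotientAddGroup.mk'_surjective P)

end Quot

lemma _root_.GRingData.toMod_isGraded {𝒜 : GRingData Γ R} (h : 𝒜.IsObjectUnital) :
    𝒜.toMod.IsGraded 𝒜 where
  add_smul := h.right_distrib
  smul_add := h.left_distrib
  smul_mul := fun m a b => (h.mul_assoc m a b).symm
  decompose := h.decompose
  independent := h.independent
  smul_mem := @fun e f g σ τ m a hm ha => h.mul_mem σ τ hm ha
  smul_eq_zero := @fun e f g g' σ τ m a hne hm ha => h.mul_eq_zero σ τ hne hm ha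
  smul_one := @fun e f σ m hm => h.mul_one σ hm

/-- If `x` is homogeneous of degree `σ` and `x · (∑ cf τ) = 0` for homogeneous
`cf τ`, then each `x · cf τ = 0`. -/
lemma smul_homog_indep (h : ℳ.IsGraded 𝒜) {e f : Γ} (σ : e ⟶ f) {x : M}
    (hx : x ∈ ℳ.component σ) (s : Finset (GrIdx Γ)) (cf : GrIdx Γ → R)
    (hcf : ∀ τ ∈ s, cf τ ∈ 𝒜.component τ.2.2)
    (hsum : ℳ.smul x (∑ τ ∈ s, cf τ) = 0) :
    ∀ τ ∈ s, ℳ.smul x (cf τ) = 0 := by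
  classical
  set F : GrIdx Γ → GrIdx Γ := fun τ =>
    if hτ : τ.2.1 = e then ⟨τ.1, f, (τ.2.2 ≫ eqToHom hτ) ≫ σ⟩ else τ with hF
  set se := s.filter (fun τ => τ.2.1 = e) with hse
  have hFval : ∀ (g : Γ) (t : g ⟶ e), F ⟨g, e, t⟩ = ⟨g, f, t ≫ σ⟩ := by
    intro g t
    simp [hF]
  have hzero : ∀ τ ∈ s, τ.2.1 ≠ e → ℳ.smul x (cf τ) = 0 := by
    rintro ⟨g, g', t⟩ hτ hne
    exact h.smul_eq_zero σ t hne hx (hcf _ hτ)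
  have hFinj : ∀ τ₁ ∈ se, ∀ τ₂ ∈ se, F τ₁ = F τ₂ → τ₁ = τ₂ := by
    rintro ⟨g₁, h₁, t₁⟩ hm₁ ⟨g₂, h₂, t₂⟩ hm₂ hFeq
    rw [hse, Finset.mem_filter] at hm₁ hm₂
    have he₁ : h₁ = e := hm₁.2
    have he₂ : h₂ = e := hm₂.2
    subst he₁; subst he₂
    rw [hFval g₁ t₁, hFval g₂ t₂] at hFeq
    have hg : g₁ = g₂ := congrArg Sigma.fst hFeq
    subst hg
    have ht' : t₁ ≫ σ = t₂ ≫ σ := by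
      have h2 := (Sigma.mk.inj_iff.mp hFeq).2
      have h3 := (Sigma.mk.inj_iff.mp (eq_of_heq h2)).2
      exact eq_of_heq h3
    have ht : t₁ = t₂ := by
      have hcomp := congrArg (fun m => m ≫ Groupoid.inv σ) ht'
      simpa [Category.assoc] using hcomp
    rw [ht]
  have hfilter : ∀ τ₀ ∈ se, se.filter (fun τ => F τ = F τ₀) = {τ₀} := by
    intro τ₀ hτ₀
    apply Finset.ext
    intro τ
    simp only [Finset.mem_filter, Finset.mem_singleton]
    constructor
    · rintro ⟨hτ, hFτ⟩; exact hFinj τ hτ τ₀ hτ₀ hFτ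
    · rintro rfl; exact ⟨hτ₀, rfl⟩
  have hmem2 : ∀ δ ∈ se.image F,
      (∑ τ ∈ se.filter (fun τ => F τ = δ), ℳ.smul x (cf τ)) ∈ ℳ.component δ.2.2 := by
    intro δ hδ
    obtain ⟨τ₀, hτ₀, rfl⟩ := Finset.mem_image.mp hδ
    rw [hfilter τ₀ hτ₀, Finset.sum_singleton]
    have hτ₀' := hτ₀
    rw [hse, Finset.mem_filter] at hτ₀'
    obtain ⟨g, g', t⟩ := τ₀
    have he : g' = e := hτ₀'.2
    subst he
    rw [hFval g t]
    exact h.smul_mem σ t hx (hcf _ hτ₀'.1)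
  have hsum2 : ∑ δ ∈ se.image F,
      ∑ τ ∈ se.filter (fun τ => F τ = δ), ℳ.smul x (cf τ) = 0 := by
    rw [Finset.sum_fiberwise_of_maps_to (fun τ hτ => Finset.mem_image_of_mem F hτ)]
    rw [hse, Finset.sum_filter_of_ne
      (fun τ hτ hne => by by_contra hc; exact hne (hzero τ hτ hc))]
    calc ∑ τ ∈ s, ℳ.smul x (cf τ) = ℳ.smul x (∑ τ ∈ s, cf τ) :=
          (map_sum (h.homL x) cf s).symm
      _ = 0 := hsum
  have key := h.independent (se.image F)
    (fun δ => ∑ τ ∈ se.filter (fun τ => F τ = δ), ℳ.smul x (cf τ)) hmem2 hsum2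
  intro τ hτ
  by_cases hce : τ.2.1 = e
  · have hτse : τ ∈ se := by rw [hse, Finset.mem_filter]; exact ⟨hτ, hce⟩
    have hk := key (F τ) (Finset.mem_image_of_mem F hτse)
    simp only [hfilter τ hτse, Finset.sum_singleton] at hk
    exact hk
  · exact hzero τ hτ hce

lemma ker_isGrSub (h𝒜 : 𝒜.IsObjectUnital) (h : ℳ.IsGraded 𝒜) {e f : Γ} (σ : e ⟶ f)
    {x : M} (hx : x ∈ ℳ.component σ) : 𝒜.toMod.IsGrSub (h.homL x).ker := by
  constructor
  · intro r hr a
    rw [AddMonoidHom.mem_ker] at hr ⊢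
    show ℳ.smul x (𝒜.mul r a) = 0
    rw [h.smul_mul]
    rw [h.homL_apply] at hr
    rw [hr, h.zero_smul]
  · intro r hr
    rw [AddMonoidHom.mem_ker, h.homL_apply] at hr
    obtain ⟨s, cf, hcf, rfl⟩ := h𝒜.decompose r
    have hz := smul_homog_indep h σ hx s cf hcf hr
    refine AddSubgroup.sum_mem _ fun τ hτ => AddSubgroup.subset_closure
      ⟨?_, τ.1, τ.2.1, τ.2.2, hcf τ hτ⟩
    rw [AddMonoidHom.mem_ker, h.homL_apply]
    exact hz τ hτ

/-- Key lemma: if `J ⊆ rad^gr(R)` then `J` annihilates every gr-simple module. -/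
lemma smul_eq_zero_of_le_grRad (h𝒜 : 𝒜.IsObjectUnital) (h : ℳ.IsGraded 𝒜)
    (hsimple : ℳ.IsGrSimple) {J : AddSubgroup R} (hJle : J ≤ 𝒜.toMod.grRad) :
    ∀ (x : M) (a : R), a ∈ J → ℳ.smul x a = 0 := by
  have hhom : ∀ (e f : Γ) (σ : e ⟶ f), ∀ x ∈ ℳ.component σ, ∀ a ∈ J,
      ℳ.smul x a = 0 := by
    intro e f σ x hx a haJ
    by_cases hx0 : x = 0
    · rw [hx0, h.zero_smul]
    have hker : 𝒜.toMod.IsGrSub (h.homL x).ker := ker_isGrSub h𝒜 h σ hx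
    have hKmax : 𝒜.toMod.IsGrMaximalSub (h.homL x).ker := by
      refine ⟨hker, ?_, ?_⟩
      · intro htop
        have h1 : 𝒜.one e ∈ (h.homL x).ker := htop ▸ AddSubgroup.mem_top _
        rw [AddMonoidHom.mem_ker, h.homL_apply, h.smul_one σ hx] at h1
        exact hx0 h1
      · intro L hL hKL
        set I := L.map (h.homL x) with hI
        have hIgr : ℳ.IsGrSub I := by
          constructor
          · rintro y hy b
            obtain ⟨l, hl, rfl⟩ := hy
            rw [h.homL_apply, ← h.smul_mul]
            exact ⟨𝒜.mul l b, hL.1 l hl b, rfl⟩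
          · rintro y hy
            obtain ⟨l, hl, rfl⟩ := hy
            have hcl := hL.2 l hl
            have hmap : (h.homL x) l ∈
                (AddSubgroup.closure {z : R | z ∈ L ∧ 𝒜.toMod.IsHomogeneous z}).map
                  (h.homL x) :=
              AddSubgroup.mem_map_of_mem _ hcl
            rw [AddMonoidHom.map_closure] at hmap
            refine AddSubgroup.closure_mono ?_ hmap
            rintro z ⟨w, ⟨hwL, g, g', τ, hw⟩, rfl⟩
            refine ⟨⟨w, hwL, rfl⟩, ?_⟩
            by_cases hge : g' = e
            · subst hge
              exact ⟨g, f, τ ≫ σ, h.smul_mem σ τ hx hw⟩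
            · refine ⟨e, f, σ, ?_⟩
              rw [h.homL_apply, h.smul_eq_zero σ τ hge hx hw]
              exact zero_mem _
        rcases hsimple.2 I hIgr with hc | hc
        · left
          refine le_antisymm ?_ hKL
          intro l hl
          rw [AddMonoidHom.mem_ker]
          have hin : (h.homL x) l ∈ I := ⟨l, hl, rfl⟩
          rw [hc] at hin
          exact hin
        · right
          rw [eq_top_iff]
          intro r _
          have hin : (h.homL x) r ∈ I := hc ▸ AddSubgroup.mem_top _
          obtain ⟨l, hl, hle⟩ := hin
          have hrl : r - l ∈ (h.homL x).ker := by
            rw [AddMonoidHom.mem_ker, map_sub, hle, sub_self]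
          have h2 := add_mem (hKL hrl) hl
          rwa [sub_add_cancel] at h2
    have hrad : 𝒜.toMod.grRad ≤ (h.homL x).ker := sInf_le hKmax
    have h3 := hrad (hJle haJ)
    rwa [AddMonoidHom.mem_ker, h.homL_apply] at h3
  intro x a haJ
  obtain ⟨s, cf, hcf, rfl⟩ := h.decompose x
  calc ℳ.smul (∑ γ ∈ s, cf γ) a = ∑ γ ∈ s, ℳ.smul (cf γ) a := map_sum (h.homR a) cf s
    _ = 0 := Finset.sum_eq_zero fun γ hγ => hhom _ _ _ _ (hcf γ hγ) a haJ

lemma rClosure_homog_isGrSub (h𝒜 : 𝒜.IsObjectUnital) (h : ℳ.IsGraded 𝒜) {x : M}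
    (hx : ℳ.IsHomogeneous x) : ℳ.IsGrSub (ℳ.rClosure {x}) := by
  obtain ⟨e, f, σ, hxσ⟩ := hx
  refine ⟨fun m hm a => ℳ.rClosure_smul hm a, ?_⟩
  set C := AddSubgroup.closure ({x} ∪ Set.range (ℳ.smul x)) with hC
  have hCsmul : ∀ m ∈ C, ∀ a : R, ℳ.smul m a ∈ C := by
    intro m hm
    induction hm using AddSubgroup.closure_induction with
    | mem z hz =>
      intro a
      apply AddSubgroup.subset_closure
      rcases hz with hz | ⟨b, rfl⟩
      · right
        exact ⟨a, by rw [Set.mem_singleton_iff.mp hz]⟩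
      · right
        exact ⟨𝒜.mul b a, h.smul_mul x b a⟩
    | zero =>
      intro a
      rw [h.zero_smul]
      exact zero_mem _
    | add z w _ _ ihz ihw =>
      intro a
      rw [h.add_smul]
      exact add_mem (ihz a) (ihw a)
    | neg z _ ihz =>
      intro a
      rw [h.neg_smul]
      exact neg_mem (ihz a)
  have hxC : x ∈ C := AddSubgroup.subset_closure (Or.inl rfl)
  have hCeq : ℳ.rClosure {x} = C := by
    refine le_antisymm (ℳ.rClosure_le (by simpa using hxC) hCsmul) ?_
    rw [hC, AddSubgroup.closure_le]
    rintro z (hz | ⟨b, rfl⟩)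
    · rw [Set.mem_singleton_iff.mp hz]
      exact ℳ.subset_rClosure {x} rfl
    · exact ℳ.rClosure_smul (ℳ.subset_rClosure {x} rfl) b
  intro n hn
  rw [hCeq, hC] at hn
  refine (AddSubgroup.closure_le _).mpr ?_ hn
  rintro z (hz | ⟨b, rfl⟩)
  · apply AddSubgroup.subset_closure
    rw [Set.mem_singleton_iff.mp hz]
    exact ⟨ℳ.subset_rClosure {x} rfl, e, f, σ, hxσ⟩
  · obtain ⟨s, cf, hcf, rfl⟩ := h𝒜.decompose b
    have hms : ℳ.smul x (∑ γ ∈ s, cf γ) = ∑ γ ∈ s, ℳ.smul x (cf γ) :=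
      map_sum (h.homL x) cf s
    rw [hms]
    refine AddSubgroup.sum_mem _ fun τ hτ => AddSubgroup.subset_closure ⟨?_, ?_⟩
    · exact ℳ.rClosure_smul (ℳ.subset_rClosure {x} rfl) (cf τ)
    · obtain ⟨g, g', t⟩ := τ
      by_cases hge : g' = e
      · subst hge
        exact ⟨g, f, t ≫ σ, h.smul_mem σ t hxσ (hcf _ hτ)⟩
      · refine ⟨e, f, σ, ?_⟩
        rw [h.smul_eq_zero σ t hge hxσ (hcf _ hτ)]
        exact zero_mem _

lemma fg_of_isGrSimple (h𝒜 : 𝒜.IsObjectUnital) (h : ℳ.IsGraded 𝒜)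
    (hs : ℳ.IsGrSimple) : ℳ.FG := by
  obtain ⟨z, hz⟩ : ∃ z : M, z ≠ 0 := by
    by_contra hc
    push_neg at hc
    refine hs.1 ?_
    ext m
    simp [hc m]
  obtain ⟨s, cf, hcf, rfl⟩ := h.decompose z
  have hex : ∃ γ ∈ s, cf γ ≠ 0 := by
    by_contra hc
    push_neg at hc
    exact hz (Finset.sum_eq_zero hc)
  obtain ⟨γ, hγ, hcγ⟩ := hex
  have hgr := rClosure_homog_isGrSub h𝒜 h ⟨γ.1, γ.2.1, γ.2.2, hcf γ hγ⟩
  rcases hs.2 _ hgr with hc | hc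
  · refine absurd ?_ hcγ
    have := hc ▸ ℳ.subset_rClosure {cf γ} rfl
    simpa using this
  · exact ⟨{cf γ}, by simpa using hc⟩

lemma exists_grMaximalSub (h : ℳ.IsGraded 𝒜) (hFG : ℳ.FG)
    (hne : (⊤ : AddSubgroup M) ≠ ⊥) : ∃ P, ℳ.IsGrMaximalSub P := by
  classical
  obtain ⟨gens, hgens⟩ := hFG
  set S : Set (AddSubgroup M) := {P | ℳ.IsGrSub P ∧ P ≠ ⊤} with hS
  have hbot : (⊥ : AddSubgroup M) ∈ S := ⟨isGrSub_bot h, fun hc => hne hc.symm⟩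
  have hchain : ∀ c ⊆ S, IsChain (· ≤ ·) c → ∀ y ∈ c, ∃ ub ∈ S, ∀ z ∈ c, z ≤ ub := by
    intro c hcS hchain y hyc
    have hcne : c.Nonempty := ⟨y, hyc⟩
    have hdir : DirectedOn (· ≤ ·) c := hchain.directedOn
    have hmem : ∀ {m : M}, m ∈ sSup c ↔ ∃ P ∈ c, m ∈ P := fun {m} =>
      AddSubgroup.mem_sSup_of_directedOn hcne hdir
    refine ⟨sSup c, ⟨⟨?_, ?_⟩, ?_⟩, fun z hz => le_sSup hz⟩
    · intro m hm a
      obtain ⟨P, hPc, hmP⟩ := hmem.mp hm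
      exact le_sSup hPc ((hcS hPc).1.1 m hmP a)
    · intro n hn
      obtain ⟨P, hPc, hnP⟩ := hmem.mp hn
      refine AddSubgroup.closure_mono ?_ ((hcS hPc).1.2 n hnP)
      rintro z ⟨hzP, hzh⟩
      exact ⟨le_sSup hPc hzP, hzh⟩
    · intro htop
      have hfin : ∀ t : Finset M, (∀ g ∈ t, ∃ P ∈ c, g ∈ P) →
          ∃ P ∈ c, ∀ g ∈ t, g ∈ P := by
        intro t
        induction t using Finset.induction_on with
        | empty => exact fun _ => ⟨y, hyc, by simp⟩
        | @insert a t ha ih =>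
          intro hall
          obtain ⟨P, hPc, hP⟩ := ih (fun g hg => hall g (Finset.mem_insert_of_mem hg))
          obtain ⟨Q, hQc, hQ⟩ := hall _ (Finset.mem_insert_self _ _)
          obtain ⟨W, hWc, hPW, hQW⟩ := hdir P hPc Q hQc
          refine ⟨W, hWc, fun g hg => ?_⟩
          rcases Finset.mem_insert.mp hg with rfl | hg
          · exact hQW hQ
          · exact hPW (hP g hg)
      obtain ⟨P, hPc, hP⟩ := hfin gens
        (fun g _ => hmem.mp (htop ▸ AddSubgroup.mem_top g))
      have hle : ℳ.rClosure ↑gens ≤ P :=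
        ℳ.rClosure_le (fun g hg => hP g hg) ((hcS hPc).1.1)
      exact (hcS hPc).2 (top_le_iff.mp (hgens ▸ hle))
  obtain ⟨P, _, hPmax⟩ := zorn_le_nonempty₀ S hchain ⊥ hbot
  refine ⟨P, hPmax.1.1, hPmax.1.2, ?_⟩
  intro L hL hPL
  by_cases hLtop : L = ⊤
  · right; exact hLtop
  · left; exact le_antisymm (hPmax.2 ⟨hL, hLtop⟩ hPL) hPL

end GModData

end NakayamaAux

/-- (Graded Nakayama lemma.) Let `R` be a `Γ`-graded ring and
`J` a graded right ideal of `R`. The following are equivalent: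
(1) `J ⊆ rad^gr(R)`; (2) for every finitely generated `Γ`-graded right
`R`-module `M`, `M J = M` implies `M = 0`; (3) for every `Γ`-graded right
`R`-module `M` and every graded submodule `N` of `M` with `M/N` finitely
generated, `N + M J = M` implies `N = M`. -/
theorem graded_nakayama_tfae
    {Γ : Type u} [Groupoid.{u} Γ] {R : Type u} [AddCommGroup R]
    (𝒜 : GRingData Γ R) (h𝒜 : 𝒜.IsObjectUnital)
    (J : AddSubgroup R) (hJ : 𝒜.toMod.IsGrSub J) :
    List.TFAE [
      J ≤ 𝒜.toMod.grRad,
      ∀ (M : Type u) [AddCommGroup M] (ℳ : GModData Γ R M),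
        ℳ.IsGraded 𝒜 → ℳ.FG → ℳ.smulSet J = ⊤ → ∀ m : M, m = 0,
      ∀ (M : Type u) [AddCommGroup M] (ℳ : GModData Γ R M),
        ℳ.IsGraded 𝒜 → ∀ N : AddSubgroup M, ℳ.IsGrSub N → (ℳ.quot N).FG →
          N ⊔ ℳ.smulSet J = ⊤ → N = ⊤ ] := by
  have htR : 𝒜.toMod.IsGraded 𝒜 := GRingData.toMod_isGraded h𝒜
  tfae_have 1 → 2 := by
    intro h1 M _ ℳ hg hfg htop m
    by_contra hm
    have hne : (⊤ : AddSubgroup M) ≠ ⊥ := by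
      intro hc
      have hmb : m ∈ (⊥ : AddSubgroup M) := hc ▸ AddSubgroup.mem_top m
      exact hm (by simpa using hmb)
    obtain ⟨P, hP⟩ := GModData.exists_grMaximalSub hg hfg hne
    have hq := GModData.quot_isGraded hg hP.1
    have hsimp := GModData.quot_isGrSimple hg hP
    have hz := GModData.smul_eq_zero_of_le_grRad h𝒜 hq hsimp h1
    obtain ⟨y, hy⟩ : ∃ y, y ∉ P := by
      by_contra hc
      push_neg at hc
      exact hP.2.1 ((AddSubgroup.eq_top_iff' P).mpr hc)
    have hmem : QuotientAddGroup.mk y ∈ (ℳ.smulSet J).map (QuotientAddGroup.mk' P) :=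
      ⟨y, htop ▸ AddSubgroup.mem_top y, rfl⟩
    have hmem2 := GModData.map_smulSet_le hg hP.1.1 J hmem
    have hbot : (ℳ.quot P).smulSet J ≤ ⊥ := by
      rw [GModData.smulSet, AddSubgroup.closure_le]
      rintro z ⟨mq, a, haJ, rfl⟩
      simp [hz mq a haJ]
    have hzero := hbot hmem2
    rw [AddSubgroup.mem_bot, QuotientAddGroup.eq_zero_iff] at hzero
    exact hy hzero
  tfae_have 2 → 3 := by
    intro h2 M _ ℳ hg N hN hfgq hsup
    have hqg := GModData.quot_isGraded hg hN
    have hst : (ℳ.quot N).smulSet J = ⊤ := by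
      rw [eq_top_iff]
      intro x _
      obtain ⟨m, rfl⟩ := QuotientAddGroup.mk_surjective x
      have hmtop : m ∈ N ⊔ ℳ.smulSet J := hsup ▸ AddSubgroup.mem_top m
      obtain ⟨n, hn, w, hw, rfl⟩ := AddSubgroup.mem_sup.mp hmtop
      have hmk : (QuotientAddGroup.mk (n + w) : M ⧸ N) = QuotientAddGroup.mk w := by
        rw [QuotientAddGroup.mk_add, (QuotientAddGroup.eq_zero_iff n).mpr hn, zero_add]
      rw [hmk]
      exact GModData.map_smulSet_le hg hN.1 J ⟨w, hw, rfl⟩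
    have hall := h2 (M ⧸ N) (ℳ.quot N) hqg hfgq hst
    rw [eq_top_iff]
    intro m _
    rw [← QuotientAddGroup.eq_zero_iff]
    exact hall _
  tfae_have 3 → 2 := by
    intro h3 M _ ℳ hg hfg htop m
    have hbot : ℳ.IsGrSub (⊥ : AddSubgroup M) := GModData.isGrSub_bot hg
    have hfgq := GModData.fg_quot hg hbot.1 hfg
    have hres := h3 M ℳ hg ⊥ hbot hfgq (by rwa [bot_sup_eq])
    have hmb : m ∈ (⊥ : AddSubgroup M) := hres ▸ AddSubgroup.mem_top m
    simpa using hmb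
  tfae_have 2 → 1 := by
    intro h2
    by_contra hle
    have hex : ∃ P, 𝒜.toMod.IsGrMaximalSub P ∧ ¬ J ≤ P := by
      by_contra hc
      push_neg at hc
      exact hle (le_sInf fun P hP => hc P hP)
    obtain ⟨P, hP, hnle⟩ := hex
    have hsupT : J ⊔ P = ⊤ := by
      have hgr := GModData.isGrSub_sup htR hJ hP.1
      rcases hP.2.2 _ hgr le_sup_right with hc | hc
      · exact absurd (hc ▸ le_sup_left) hnle
      · exact hc
    have hqg := GModData.quot_isGraded htR hP.1
    have hsimp := GModData.quot_isGrSimple htR hP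
    have hfg := GModData.fg_of_isGrSimple h𝒜 hqg hsimp
    have hst : (𝒜.toMod.quot P).smulSet J = ⊤ := by
      rw [eq_top_iff]
      intro x _
      obtain ⟨r, rfl⟩ := QuotientAddGroup.mk_surjective x
      have hrtop : r ∈ J ⊔ P := hsupT ▸ AddSubgroup.mem_top r
      obtain ⟨j, hj, p, hp, rfl⟩ := AddSubgroup.mem_sup.mp hrtop
      have hmk : (QuotientAddGroup.mk (j + p) : R ⧸ P) = QuotientAddGroup.mk j := by
        rw [QuotientAddGroup.mk_add, (QuotientAddGroup.eq_zero_iff p).mpr hp, add_zero]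
      rw [hmk]
      have hjc := hJ.2 j hj
      have hmap : (QuotientAddGroup.mk' P) j ∈
          (AddSubgroup.closure {z : R | z ∈ J ∧ 𝒜.toMod.IsHomogeneous z}).map
            (QuotientAddGroup.mk' P) :=
        AddSubgroup.mem_map_of_mem _ hjc
      rw [AddMonoidHom.map_closure] at hmap
      have hkey : (QuotientAddGroup.mk j : R ⧸ P) ∈ (𝒜.toMod.quot P).smulSet J := by
        refine (AddSubgroup.closure_le _).mpr ?_ hmap
        rintro z ⟨w, ⟨hwJ, g, g', τ, hw⟩, rfl⟩
        apply AddSubgroup.subset_closure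
        refine ⟨QuotientAddGroup.mk (𝒜.one g'), w, hwJ, ?_⟩
        rw [QuotientAddGroup.mk'_apply, GModData.quot_smul_mk htR hP.1.1]
        exact congrArg QuotientAddGroup.mk (h𝒜.one_mul τ hw).symm
      exact hkey
    have hall := h2 (R ⧸ P) (𝒜.toMod.quot P) hqg hfg hst
    apply hP.2.1
    rw [eq_top_iff]
    intro r _
    rw [← QuotientAddGroup.eq_zero_iff]
    exact hall _
  tfae_finish
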